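/- If d(n) ≥ 0 for all but finitely many n and the Dirichlet series Ψ(s) = Σ_{n≥1} d(n) n^{-s} has finite abscissa of convergence σ_c, then Ψ has a singularity on the real axis at the point s = σ_c (i.e., Ψ cannot be analytically continued to a holomorphic function on any neighborhood of σ_c). -/

import Mathlib

open Complex Filter
open scoped Nat

private lemma logMul_iterate (f : ℕ → ℂ) (k n : ℕ) :
    (LSeries.logMul^[k] f) n = (Complex.log n) ^ k * f n := by
  induction k with
  | zero => simp
  | succ k ih =>
    rw [Function.iterate_succ', Function.comp_apply]
    simp only [LSeries.logMul, ih, pow_succ]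
    ring

private lemma real_exp_tsum (x : ℝ) : ∑' (k : ℕ), (k ! : ℝ)⁻¹ * x ^ k = Real.exp x := by
  rw [Real.exp_eq_exp_ℝ, NormedSpace.exp_eq_tsum (𝕂 := ℝ)]
  simp [smul_eq_mul]

set_option maxHeartbeats 1600000 in
private lemma landau_aux (d : ℕ → ℝ) (σc : ℝ)
    (hnn : ∀ n, 0 ≤ d n)
    (hconv : ∀ s : ℂ, σc < s.re → LSeriesSummable (fun n => (d n : ℂ)) s)
    (F : ℂ → ℂ) (U : Set ℂ) (hU : IsOpen U) (hmem : (σc : ℂ) ∈ U)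
    (hFdiff : DifferentiableOn ℂ F (U ∪ {s : ℂ | σc < s.re}))
    (hFeq : ∀ s : ℂ, σc < s.re → F s = LSeries (fun n => (d n : ℂ)) s) :
    ∃ σ : ℝ, σ < σc ∧ LSeriesSummable (fun n => (d n : ℂ)) (σ : ℂ) := by
  set f : ℕ → ℂ := fun n => (d n : ℂ) with hfdef
  have habs : LSeries.abscissaOfAbsConv f ≤ (σc : EReal) :=
    LSeries.abscissaOfAbsConv_le_of_forall_lt_LSeriesSummable fun y hy =>
      hconv y (by simpa using hy)
  obtain ⟨ε, hε, hball⟩ := Metric.isOpen_iff.mp hU _ hmem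
  set δ : ℝ := min (ε ^ 2 / 6) 1 with hδdef
  have hδ : 0 < δ := lt_min (by positivity) one_pos
  have hδ1 : δ ≤ 1 := min_le_right _ _
  have hδε : 5 * δ < ε ^ 2 := by
    have h1 : δ ≤ ε ^ 2 / 6 := min_le_left _ _
    nlinarith
  set a : ℂ := ((σc + 1 : ℝ) : ℂ) with hadef
  have ha_re : a.re = σc + 1 := by simp [hadef]
  have ha_im : a.im = 0 := by simp [hadef]
  -- the ball of radius `1 + δ` around `a` is inside the domain of holomorphy
  have hsub : Metric.ball a (1 + δ) ⊆ U ∪ {s : ℂ | σc < s.re} := by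
    intro s hs
    rcases lt_or_ge σc s.re with h | h
    · exact Or.inr h
    · left
      apply hball
      rw [Metric.mem_ball] at hs ⊢
      rw [Complex.dist_eq_re_im] at hs ⊢
      rw [Real.sqrt_lt' hε]
      rw [Real.sqrt_lt' (by linarith)] at hs
      rw [ha_re, ha_im] at hs
      simp only [Complex.ofReal_re, Complex.ofReal_im, sub_zero] at hs ⊢
      nlinarith [sq_nonneg (s.re - σc), sq_nonneg s.im]
  set σ : ℝ := σc - δ / 2 with hσdef
  refine ⟨σ, by simp only [hσdef]; linarith, ?_⟩
  set b : ℝ := 1 + δ / 2 with hbdef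
  have hb : 0 < b := by positivity
  have hzmem : ((σ : ℝ) : ℂ) ∈ Metric.ball a (1 + δ) := by
    rw [Metric.mem_ball, hadef, Complex.isometry_ofReal.dist_eq]
    rw [Real.dist_eq]
    rw [show σ - (σc + 1) = -(1 + δ / 2) by rw [hσdef]; ring]
    rw [abs_neg, abs_of_pos (by positivity)]
    linarith
  have hT := Complex.hasSum_taylorSeries_on_ball (hFdiff.mono hsub) hzmem
  -- identify the iterated derivatives
  have haH : LSeries.abscissaOfAbsConv f < (a.re : EReal) := by
    refine lt_of_le_of_lt habs ?_
    rw [ha_re]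
    exact_mod_cast (by linarith : σc < σc + 1)
  have hFeq' : F =ᶠ[nhds a] LSeries f := by
    filter_upwards [(isOpen_lt continuous_const continuous_re).mem_nhds
      (show σc < a.re by rw [ha_re]; linarith)] with s hs
    exact hFeq s hs
  have hD : ∀ k, iteratedDeriv k F a = (-1) ^ k * LSeries (LSeries.logMul^[k] f) a :=
    fun k => by
      rw [hFeq'.iteratedDeriv_eq k, LSeries_iteratedDeriv k haH]
  -- real description of the terms
  set u : ℕ → ℕ → ℝ :=
    fun k n => if n = 0 then 0 else (Real.log n) ^ k * d n / (n : ℝ) ^ (σc + 1) with hudef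
  have hterm : ∀ k n, LSeries.term (LSeries.logMul^[k] f) a n = ((u k n : ℝ) : ℂ) := by
    intro k n
    rcases eq_or_ne n 0 with rfl | hn
    · simp [hudef, LSeries.term_zero]
    · rw [LSeries.term_of_ne_zero hn, logMul_iterate, hudef]
      simp only [hn, if_false]
      have hlog : (Complex.log n) = ((Real.log n : ℝ) : ℂ) := Complex.natCast_log.symm
      have hpow : (n : ℂ) ^ a = (((n : ℝ) ^ (σc + 1) : ℝ) : ℂ) := by
        rw [hadef, Complex.ofReal_cpow (Nat.cast_nonneg n)]
        norm_num
      rw [hlog, hpow, hfdef]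
      push_cast
      ring
  have hsum_u : ∀ k, Summable (u k) := by
    intro k
    have h1 : LSeriesSummable (LSeries.logMul^[k] f) a :=
      LSeriesSummable_of_abscissaOfAbsConv_lt_re
        (by rwa [LSeries.absicssaOfAbsConv_logPowMul])
    rw [LSeriesSummable] at h1
    rw [← Complex.summable_ofReal (f := u k)]
    exact h1.congr fun n => hterm k n
  have hLS : ∀ k, LSeries (LSeries.logMul^[k] f) a = ((∑' n, u k n : ℝ) : ℂ) := by
    intro k
    rw [LSeries, Complex.ofReal_tsum]
    exact tsum_congr fun n => hterm k n
  -- the Taylor coefficients as real numbers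
  set v : ℕ → ℝ := fun k => (k ! : ℝ)⁻¹ * b ^ k * ∑' n, u k n with hvdef
  have hT' : HasSum (fun k => ((v k : ℝ) : ℂ)) (F ((σ : ℝ) : ℂ)) := by
    refine hT.congr_fun fun k => ?_
    have hza : ((σ : ℝ) : ℂ) - a = -((b : ℝ) : ℂ) := by
      rw [hadef, ← Complex.ofReal_sub]
      rw [show σ - (σc + 1) = -b by rw [hσdef, hbdef]; ring]
      push_cast
      ring
    rw [hD k, hLS k, hza, smul_eq_mul, smul_eq_mul]
    have key : (-((b : ℝ) : ℂ)) ^ k * ((-1 : ℂ) ^ k * ((∑' n, u k n : ℝ) : ℂ)) =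
        ((b : ℝ) : ℂ) ^ k * ((∑' n, u k n : ℝ) : ℂ) := by
      rw [← mul_assoc, ← mul_pow, show -((b : ℝ) : ℂ) * (-1) = ((b : ℝ) : ℂ) by ring]
    rw [key]
    simp only [hvdef]
    push_cast
    ring
  have hv : Summable v := Complex.summable_ofReal.mp hT'.summable
  -- double series with nonnegative terms
  set t : ℕ × ℕ → ℝ := fun p => (p.1 ! : ℝ)⁻¹ * b ^ p.1 * u p.1 p.2 with htdef
  have htnn : 0 ≤ t := by
    rintro ⟨k, n⟩
    rcases eq_or_ne n 0 with rfl | hn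
    · simp [htdef, hudef]
    · have h1 : 0 ≤ Real.log n := Real.log_nonneg (by exact_mod_cast Nat.one_le_iff_ne_zero.mpr hn)
      have h2 : (0 : ℝ) < (n : ℝ) ^ (σc + 1) :=
        Real.rpow_pos_of_pos (by exact_mod_cast Nat.pos_of_ne_zero hn) _
      simp only [htdef, hudef, hn, if_false]
      refine mul_nonneg (mul_nonneg (by positivity) (by positivity)) ?_
      exact div_nonneg (mul_nonneg (pow_nonneg h1 _) (hnn n)) h2.le
  have hvt : ∀ k, v k = ∑' n, t (k, n) := by
    intro k
    simp only [hvdef, htdef]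
    exact tsum_mul_left.symm
  have hts : Summable t := by
    refine (summable_prod_of_nonneg htnn).mpr ⟨fun k => ?_, ?_⟩
    · refine Summable.congr ((hsum_u k).mul_left ((k ! : ℝ)⁻¹ * b ^ k)) fun n => ?_
      simp only [htdef]
    · exact hv.congr fun k => hvt k
  have hswap : Summable fun n => ∑' k, t (k, n) := by
    have h1 : Summable fun p : ℕ × ℕ => t p.swap := hts.prod_symm
    have h2 : (0 : ℕ × ℕ → ℝ) ≤ fun p => t p.swap := fun p => htnn p.swap
    exact ((summable_prod_of_nonneg h2).mp h1).2
  -- compute the inner sums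
  have hinner : ∀ n : ℕ, (∑' k, t (k, n)) = if n = 0 then 0 else d n / (n : ℝ) ^ σ := by
    intro n
    rcases eq_or_ne n 0 with rfl | hn
    · simp [htdef, hudef]
    · have hn0 : (0 : ℝ) < (n : ℝ) := by exact_mod_cast Nat.pos_of_ne_zero hn
      simp only [htdef, hudef, hn, if_false]
      have h1 : ∀ k : ℕ, (k ! : ℝ)⁻¹ * b ^ k * ((Real.log n) ^ k * d n / (n : ℝ) ^ (σc + 1)) =
          (d n / (n : ℝ) ^ (σc + 1)) * ((k ! : ℝ)⁻¹ * (b * Real.log n) ^ k) := by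
        intro k
        rw [mul_pow]
        ring
      rw [tsum_congr h1, tsum_mul_left, real_exp_tsum]
      have h2 : Real.exp (b * Real.log n) = (n : ℝ) ^ b := by
        rw [Real.rpow_def_of_pos hn0, mul_comm]
      rw [h2]
      have h3 : (n : ℝ) ^ (σc + 1) = (n : ℝ) ^ σ * (n : ℝ) ^ b := by
        rw [← Real.rpow_add hn0]
        congr 1
        rw [hσdef, hbdef]; ring
      rw [h3]
      have h4 : (n : ℝ) ^ σ ≠ 0 := (Real.rpow_pos_of_pos hn0 _).ne'
      have h5 : (n : ℝ) ^ b ≠ 0 := (Real.rpow_pos_of_pos hn0 _).ne'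
      field_simp
  have hfinal : Summable fun n => if n = 0 then 0 else d n / (n : ℝ) ^ σ :=
    hswap.congr hinner
  rw [LSeriesSummable]
  rw [← Complex.summable_ofReal] at hfinal
  refine hfinal.congr fun n => ?_
  rcases eq_or_ne n 0 with rfl | hn
  · simp [LSeries.term_zero]
  · rw [LSeries.term_of_ne_zero hn]
    simp only [hn, if_false]
    have hpow : (n : ℂ) ^ ((σ : ℝ) : ℂ) = (((n : ℝ) ^ σ : ℝ) : ℂ) := by
      rw [Complex.ofReal_cpow (Nat.cast_nonneg n)]
      norm_num
    rw [hpow, hfdef]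
    push_cast
    ring

/-- **Landau's theorem**: a Dirichlet series with eventually nonnegative real coefficients
and finite abscissa of convergence `σc` has a singularity at the real point `s = σc`:
its sum cannot be continued holomorphically to any neighbourhood of `σc`. -/
theorem landau_singularity (d : ℕ → ℝ) (σc : ℝ)
    (hnn : ∀ᶠ n in atTop, 0 ≤ d n)
    (hconv : ∀ s : ℂ, σc < s.re → LSeriesSummable (fun n => (d n : ℂ)) s)
    (hdiv : ∀ σ : ℝ, σ < σc → ¬ LSeriesSummable (fun n => (d n : ℂ)) (σ : ℂ)) :
    ¬ ∃ (F : ℂ → ℂ) (U : Set ℂ), IsOpen U ∧ (σc : ℂ) ∈ U ∧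
        DifferentiableOn ℂ F (U ∪ {s : ℂ | σc < s.re}) ∧
        ∀ s : ℂ, σc < s.re → F s = LSeries (fun n => (d n : ℂ)) s := by
  rintro ⟨F, U, hU, hmem, hFdiff, hFeq⟩
  obtain ⟨N, hN⟩ := eventually_atTop.mp hnn
  set d' : ℕ → ℝ := fun n => if n < N then 0 else d n with hd'
  set e : ℕ → ℂ := fun n => if n < N then (d n : ℂ) else 0 with hedef
  have hfe : (fun n => (d n : ℂ)) = (fun n => (d' n : ℂ)) + e := by
    funext n
    by_cases h : n < N <;> simp [hd', hedef, h]
  have hfe' : (fun n => (d' n : ℂ)) = (fun n => (d n : ℂ)) - e := by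
    rw [hfe]; funext n; simp
  have hesum : ∀ s : ℂ, LSeriesSummable e s := by
    intro s
    refine summable_of_ne_finset_zero (s := Finset.range N) fun n hn => ?_
    rw [Finset.mem_range, not_lt] at hn
    rcases eq_or_ne n 0 with rfl | h0
    · exact LSeries.term_zero e s
    · rw [LSeries.term_of_ne_zero h0]
      simp [hedef, Nat.not_lt.mpr hn]
  have hconv' : ∀ s : ℂ, σc < s.re → LSeriesSummable (fun n => (d' n : ℂ)) s := by
    intro s hs
    rw [hfe']
    exact (hconv s hs).sub (hesum s)
  have hPdiff : Differentiable ℂ (fun s => ∑ n ∈ Finset.range N, LSeries.term e s n) := by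
    apply Differentiable.fun_sum
    intro n _
    exact fun s => (LSeries.hasDerivAt_term e n s).differentiableAt
  have hPeq : ∀ s : ℂ, LSeries e s = ∑ n ∈ Finset.range N, LSeries.term e s n := by
    intro s
    refine tsum_eq_sum fun n hn => ?_
    rw [Finset.mem_range, not_lt] at hn
    rcases eq_or_ne n 0 with rfl | h0
    · exact LSeries.term_zero e s
    · rw [LSeries.term_of_ne_zero h0]
      simp [hedef, Nat.not_lt.mpr hn]
  obtain ⟨σ, hσ, hsum⟩ := landau_aux d' σc
    (fun n => by
      by_cases h : n < N
      · simp [hd', h]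
      · simpa [hd', h] using hN n (le_of_not_gt h))
    hconv'
    (fun s => F s - ∑ n ∈ Finset.range N, LSeries.term e s n) U hU hmem
    (hFdiff.sub hPdiff.differentiableOn)
    (by
      intro s hs
      show F s - ∑ n ∈ Finset.range N, LSeries.term e s n = _
      rw [hFeq s hs, hfe, LSeries_add (hconv' s hs) (hesum s), hPeq s]
      ring)
  refine hdiv σ hσ ?_
  rw [hfe]
  exact hsum.add (hesum σ)
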